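/- arXiv:2502.14392 — 2 statements merged into one kernel-verified Lean document; each statement's English description precedes it below -/
import Mathlib

section
/- Suppose that (G,m) is a ℤ²⋊Cs-tight gain graph that has a vertex v₀ of degree 3 with incident edges e₁=(v₀,v₁;m(e₁)), e₂=(v₀,v₂;m(e₂)) and e₃=(v₀,v₂;m(e₃)) (all oriented away from v₀), where v₁,v₂ are distinct vertices different from v₀, such that m(e₂) and m(e₃) have the same Cs-component. Let G−v₀+e₁₂ and G−v₀+e₁₃ be the gain graphs obtained by deleting v₀ with its incident edges and adding the edge e₁₂=(v₁,v₂;m(e₁)⁻¹m(e₂)), respectively e₁₃=(v₁,v₂;m(e₁)⁻¹m(e₃)). Then at least one of G−v₀+e₁₂ or G−v₀+e₁₃ is ℤ²⋊Cs-tight. -/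
namespace Crystal

/-- The wallpaper group `pm = ℤ² ⋊ 𝒞ₛ`.  An element is a pair of a translation
vector `t ∈ ℤ²` and a Boolean `r` recording the `𝒞ₛ`-component
(`true` = the reflection `s` in the x-axis). -/
@[ext] structure PM : Type where
  t : ℤ × ℤ
  r : Bool

namespace PM

/-- The action of the reflection component on translation vectors. -/
def act (σ : Bool) (z : ℤ × ℤ) : ℤ × ℤ := (z.1, if σ then -z.2 else z.2)

instance : Mul PM := ⟨fun a b => ⟨a.t + act a.r b.t, xor a.r b.r⟩⟩
instance : One PM := ⟨⟨0, false⟩⟩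
instance : Inv PM := ⟨fun a => ⟨act a.r (-a.t), a.r⟩⟩

lemma mul_def (a b : PM) : a * b = ⟨a.t + act a.r b.t, xor a.r b.r⟩ := rfl
lemma one_def : (1 : PM) = ⟨0, false⟩ := rfl
lemma inv_def (a : PM) : a⁻¹ = ⟨act a.r (-a.t), a.r⟩ := rfl

instance : Group PM where
  mul_assoc a b c := by
    obtain ⟨⟨x1, x2⟩, ra⟩ := a
    obtain ⟨⟨y1, y2⟩, rb⟩ := b
    obtain ⟨⟨z1, z2⟩, rc⟩ := c
    cases ra <;> cases rb <;> cases rc <;>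
      simp [mul_def, act, Prod.ext_iff] <;> omega
  one_mul a := by
    obtain ⟨⟨x1, x2⟩, ra⟩ := a
    cases ra <;> simp [mul_def, one_def, act]
  mul_one a := by
    obtain ⟨⟨x1, x2⟩, ra⟩ := a
    cases ra <;> simp [mul_def, one_def, act]
  inv_mul_cancel a := by
    obtain ⟨⟨x1, x2⟩, ra⟩ := a
    cases ra <;> simp [mul_def, one_def, inv_def, act, Prod.ext_iff]

/-- The affine action of `pm` on the plane: `(z,σ)·x = σ(x) + z`. -/
noncomputable def toPlane (g : PM) (x : ℝ × ℝ) : ℝ × ℝ :=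
  (x.1 + (g.t.1 : ℝ), (if g.r then -x.2 else x.2) + (g.t.2 : ℝ))

end PM

/-- A multigraph: a finite vertex set, a finite edge set, and two endpoint maps
(which also fix a reference orientation of every edge, from `fst` to `snd`).
Loops and parallel edges are allowed. -/
structure Multigraph (α β : Type) where
  verts : Finset α
  edges : Finset β
  fst : β → α
  snd : β → α
  fst_mem : ∀ e ∈ edges, fst e ∈ verts
  snd_mem : ∀ e ∈ edges, snd e ∈ verts

variable {α β : Type}

/-- `H` is a subgraph of `G`. -/
def IsSubgraph (H G : Multigraph α β) : Prop :=
  H.verts ⊆ G.verts ∧ H.edges ⊆ G.edges ∧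
    ∀ e ∈ H.edges, H.fst e = G.fst e ∧ H.snd e = G.snd e

/-- `(k,l)`-sparsity. -/
def Sparse (k l : ℕ) (G : Multigraph α β) : Prop :=
  ∀ H : Multigraph α β, IsSubgraph H G → 1 ≤ H.edges.card →
    (H.edges.card : ℤ) ≤ k * H.verts.card - l

/-- `(k,l)`-tightness. -/
def Tight (k l : ℕ) (G : Multigraph α β) : Prop :=
  Sparse k l G ∧ (G.edges.card : ℤ) = k * G.verts.card - l

/-- The degree of a vertex: the number of edge-incidences, loops counting twice. -/
def Multigraph.degree [DecidableEq α] (G : Multigraph α β) (v : α) : ℕ :=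
  ∑ e ∈ G.edges, ((if G.fst e = v then 1 else 0) + (if G.snd e = v then 1 else 0))

/-- The starting vertex of a step `(e, dir)` of a walk: `dir = true` means the
edge is traversed forwards. -/
def stepHead (G : Multigraph α β) (s : β × Bool) : α := if s.2 then G.fst s.1 else G.snd s.1

/-- The final vertex of a step of a walk. -/
def stepTail (G : Multigraph α β) (s : β × Bool) : α := if s.2 then G.snd s.1 else G.fst s.1

/-- `IsWalk G u v L` : `L` is a walk in `G` from `u` to `v`. -/
def IsWalk (G : Multigraph α β) : α → α → List (β × Bool) → Prop
  | u, v, [] => u = v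
  | u, v, s :: L => s.1 ∈ G.edges ∧ stepHead G s = u ∧ IsWalk G (stepTail G s) v L

/-- The net gain of a walk. -/
def walkGain (m : β → PM) (L : List (β × Bool)) : PM :=
  (L.map fun s => if s.2 then m s.1 else (m s.1)⁻¹).prod

/-- A gain graph is balanced if every closed walk has identity net gain. -/
def Balanced (G : Multigraph α β) (m : β → PM) : Prop :=
  ∀ u L, IsWalk G u u L → walkGain m L = 1

/-- A gain graph is purely periodic if every closed walk has net gain in the
translation subgroup `ℤ²`. -/
def PurelyPeriodic (G : Multigraph α β) (m : β → PM) : Prop :=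
  ∀ u L, IsWalk G u u L → (walkGain m L).r = false

/-- A multigraph is connected if every pair of its vertices is joined by a walk. -/
def Connected (G : Multigraph α β) : Prop :=
  ∀ u ∈ G.verts, ∀ v ∈ G.verts, ∃ L, IsWalk G u v L

/-- The conditions for `m` to be a gain assignment on `G`: parallel edges with the
same orientation get distinct gains, and loops get non-identity gains. -/
structure IsGainGraph (G : Multigraph α β) (m : β → PM) : Prop where
  parallel_ne : ∀ e ∈ G.edges, ∀ f ∈ G.edges,
    e ≠ f → G.fst e = G.fst f → G.snd e = G.snd f → m e ≠ m f
  loop_ne_one : ∀ e ∈ G.edges, G.fst e = G.snd e → m e ≠ 1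

/-- `ℤ²⋊𝒞ₛ`-tightness of a gain graph. -/
def PMTight (G : Multigraph α β) (m : β → PM) : Prop :=
  Tight 2 1 G ∧
    (∀ H : Multigraph α β, IsSubgraph H G → PurelyPeriodic H m → Sparse 2 2 H) ∧
    (∀ H : Multigraph α β, IsSubgraph H G → Balanced H m → Sparse 2 3 H)

/-- The orbit rigidity matrix of a `ℤ²⋊𝒞ₛ`-gain framework. -/
noncomputable def orbitMatrix [DecidableEq α] (G : Multigraph α β) (m : β → PM)
    (p : α → ℝ × ℝ) :
    Matrix {e : β // e ∈ G.edges} ({v : α // v ∈ G.verts} × Fin 2) ℝ :=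
  fun er vc =>
    let e : β := er.1
    let i : α := G.fst e
    let j : α := G.snd e
    let w : α := vc.1.1
    let entry : ℝ × ℝ :=
      if i = j then
        (if w = i then p i + p i - PM.toPlane (m e) (p i) - PM.toPlane (m e)⁻¹ (p i) else 0)
      else if w = i then p i - PM.toPlane (m e) (p j)
      else if w = j then p j - PM.toPlane (m e)⁻¹ (p i)
      else 0
    if vc.2 = 0 then entry.1 else entry.2

/-- A configuration is generic if its orbit rigidity matrix has the maximum
possible rank among all configurations. -/
def Generic [DecidableEq α] (G : Multigraph α β) (m : β → PM) (p : α → ℝ × ℝ) : Prop :=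
  ∀ q : α → ℝ × ℝ, (orbitMatrix G m q).rank ≤ (orbitMatrix G m p).rank

/-- A gain graph is rigid if the orbit rigidity matrix of a generic configuration
has rank `2|V| - 1`. -/
def Rigid [DecidableEq α] (G : Multigraph α β) (m : β → PM) : Prop :=
  ∃ p : α → ℝ × ℝ, Generic G m p ∧
    ((orbitMatrix G m p).rank : ℤ) = 2 * G.verts.card - 1

/-- A gain graph is independent if the rows of the orbit rigidity matrix of a
generic configuration are linearly independent. -/
def Independent [DecidableEq α] (G : Multigraph α β) (m : β → PM) : Prop :=
  ∃ p : α → ℝ × ℝ, Generic G m p ∧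
    LinearIndependent ℝ (fun er => orbitMatrix G m p er)

/-- A gain graph is minimally rigid if it is rigid and independent. -/
def MinimallyRigid [DecidableEq α] (G : Multigraph α β) (m : β → PM) : Prop :=
  Rigid G m ∧ Independent G m

/-- `e` joins `u` and `v` (in one of the two orientations). -/
def Joins (G : Multigraph α β) (e : β) (u v : α) : Prop :=
  (G.fst e = u ∧ G.snd e = v) ∨ (G.fst e = v ∧ G.snd e = u)

/-- The gain of an edge read with `v` as its initial vertex (inverting the gain
if the edge is oriented towards `v`). -/
def gainFrom [DecidableEq α] (G : Multigraph α β) (m : β → PM) (v : α) (e : β) : PM :=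
  if G.fst e = v then m e else (m e)⁻¹

/-- The endpoint of an edge other than `v` (for an edge incident with `v`). -/
def otherEnd [DecidableEq α] (G : Multigraph α β) (v : α) (e : β) : α :=
  if G.fst e = v then G.snd e else G.fst e

/-- Deletion of a vertex together with all edges incident with it. -/
def Multigraph.deleteVertex [DecidableEq α] (G : Multigraph α β) (v : α) :
    Multigraph α β where
  verts := G.verts.erase v
  edges := G.edges.filter fun e => G.fst e ≠ v ∧ G.snd e ≠ v
  fst := G.fst
  snd := G.snd
  fst_mem := fun e he => by
    rw [Finset.mem_filter] at he
    exact Finset.mem_erase.2 ⟨he.2.1, G.fst_mem e he.1⟩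
  snd_mem := fun e he => by
    rw [Finset.mem_filter] at he
    exact Finset.mem_erase.2 ⟨he.2.2, G.snd_mem e he.1⟩

/-- Addition of a new edge `f` from `u` to `v`. -/
def Multigraph.addEdge [DecidableEq α] [DecidableEq β] (G : Multigraph α β)
    (f : β) (u v : α) : Multigraph α β where
  verts := insert u (insert v G.verts)
  edges := insert f G.edges
  fst := Function.update G.fst f u
  snd := Function.update G.snd f v
  fst_mem := fun e he => by
    by_cases hef : e = f
    · subst hef; simp
    · rw [Function.update_of_ne hef]
      have heG : e ∈ G.edges := by
        rcases Finset.mem_insert.1 he with h | h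
        · exact absurd h hef
        · exact h
      exact Finset.mem_insert_of_mem (Finset.mem_insert_of_mem (G.fst_mem e heG))
  snd_mem := fun e he => by
    by_cases hef : e = f
    · subst hef; simp
    · rw [Function.update_of_ne hef]
      have heG : e ∈ G.edges := by
        rcases Finset.mem_insert.1 he with h | h
        · exact absurd h hef
        · exact h
      exact Finset.mem_insert_of_mem (Finset.mem_insert_of_mem (G.snd_mem e heG))

/-- `(G',m')` is obtained from `(G,m)` by a gained 0-extension. -/
def IsZeroExtension [DecidableEq α] [DecidableEq β] (G : Multigraph α β) (m : β → PM)
    (G' : Multigraph α β) (m' : β → PM) : Prop :=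
  ∃ v₀ v₁ v₂ f₁ f₂, v₀ ∉ G.verts ∧ v₁ ∈ G.verts ∧ v₂ ∈ G.verts ∧
    f₁ ∉ G.edges ∧ f₂ ∉ G.edges ∧ f₁ ≠ f₂ ∧
    G'.verts = insert v₀ G.verts ∧ G'.edges = insert f₁ (insert f₂ G.edges) ∧
    (∀ e ∈ G.edges, G'.fst e = G.fst e ∧ G'.snd e = G.snd e ∧ m' e = m e) ∧
    Joins G' f₁ v₀ v₁ ∧ Joins G' f₂ v₀ v₂ ∧
    IsGainGraph G' m'

/-- `(G',m')` is obtained from `(G,m)` by a gained 1-extension. -/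
def IsOneExtension [DecidableEq α] [DecidableEq β] (G : Multigraph α β) (m : β → PM)
    (G' : Multigraph α β) (m' : β → PM) : Prop :=
  ∃ v₀ v₃ e f₁ f₂ f₃, v₀ ∉ G.verts ∧ v₃ ∈ G.verts ∧ e ∈ G.edges ∧
    f₁ ∉ G.edges.erase e ∧ f₂ ∉ G.edges.erase e ∧ f₃ ∉ G.edges.erase e ∧
    f₁ ≠ f₂ ∧ f₁ ≠ f₃ ∧ f₂ ≠ f₃ ∧
    G'.verts = insert v₀ G.verts ∧
    G'.edges = insert f₁ (insert f₂ (insert f₃ (G.edges.erase e))) ∧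
    (∀ e' ∈ G.edges.erase e, G'.fst e' = G.fst e' ∧ G'.snd e' = G.snd e' ∧ m' e' = m e') ∧
    Joins G' f₁ v₀ (G.fst e) ∧ Joins G' f₂ v₀ (G.snd e) ∧ Joins G' f₃ v₀ v₃ ∧
    (gainFrom G' m' v₀ f₁)⁻¹ * gainFrom G' m' v₀ f₂ = m e ∧
    IsGainGraph G' m'

/-- `(G',m')` is obtained from `(G,m)` by a gained loop-1-extension. -/
def IsLoopOneExtension [DecidableEq α] [DecidableEq β] (G : Multigraph α β) (m : β → PM)
    (G' : Multigraph α β) (m' : β → PM) : Prop :=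
  ∃ v₀ v₁ l f, v₀ ∉ G.verts ∧ v₁ ∈ G.verts ∧ l ∉ G.edges ∧ f ∉ G.edges ∧ l ≠ f ∧
    G'.verts = insert v₀ G.verts ∧ G'.edges = insert l (insert f G.edges) ∧
    (∀ e ∈ G.edges, G'.fst e = G.fst e ∧ G'.snd e = G.snd e ∧ m' e = m e) ∧
    G'.fst l = v₀ ∧ G'.snd l = v₀ ∧ (m' l).r = true ∧
    Joins G' f v₀ v₁ ∧ IsGainGraph G' m'

/-- A `ℤ²⋊𝒞ₛ`-tight gain graph on `K₁¹`: a single vertex with a single loop whose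
gain has non-trivial `𝒞ₛ`-component. -/
def IsTightK11 (G : Multigraph α β) (m : β → PM) : Prop :=
  ∃ v l, G.verts = {v} ∧ G.edges = {l} ∧ G.fst l = v ∧ G.snd l = v ∧ (m l).r = true


section ReductionAux

variable {α β : Type}

/-! ### Walks -/

/-- The reversal of a walk. -/
def revWalk (L : List (β × Bool)) : List (β × Bool) := L.reverse.map fun s => (s.1, !s.2)

/-- The gain of a walk with labels in an arbitrary group. -/
def gainOf {Γ : Type} [Group Γ] (g : β → Γ) (L : List (β × Bool)) : Γ :=
  (L.map fun s => if s.2 then g s.1 else (g s.1)⁻¹).prod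

lemma walkGain_eq_gainOf (m : β → PM) (L : List (β × Bool)) : walkGain m L = gainOf m L := rfl

variable {Γ : Type} [Group Γ]

lemma gainOf_nil (g : β → Γ) : gainOf g ([] : List (β × Bool)) = 1 := rfl

lemma gainOf_cons (g : β → Γ) (s : β × Bool) (L : List (β × Bool)) :
    gainOf g (s :: L) = (if s.2 then g s.1 else (g s.1)⁻¹) * gainOf g L := by
  simp [gainOf]

lemma gainOf_append (g : β → Γ) (L1 L2 : List (β × Bool)) :
    gainOf g (L1 ++ L2) = gainOf g L1 * gainOf g L2 := by
  simp [gainOf]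

lemma gainOf_single (g : β → Γ) (s : β × Bool) :
    gainOf g [s] = (if s.2 then g s.1 else (g s.1)⁻¹) := by
  simp [gainOf]

lemma gainOf_rev (g : β → Γ) (L : List (β × Bool)) :
    gainOf g (revWalk L) = (gainOf g L)⁻¹ := by
  induction L with
  | nil => simp [revWalk, gainOf]
  | cons s L ih =>
    have h1 : revWalk (s :: L) = revWalk L ++ [(s.1, !s.2)] := by
      simp [revWalk]
    rw [h1, gainOf_append, ih, gainOf_cons]
    rcases s with ⟨e, b⟩
    cases b <;> simp [gainOf_cons, gainOf_nil, mul_inv_rev]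

lemma gainOf_congr {g g' : β → Γ} {L : List (β × Bool)}
    (h : ∀ s ∈ L, g s.1 = g' s.1) : gainOf g L = gainOf g' L := by
  induction L with
  | nil => rfl
  | cons s L ih =>
    rw [gainOf_cons, gainOf_cons, h s List.mem_cons_self,
      ih fun t ht => h t (List.mem_cons_of_mem _ ht)]

lemma isWalk_edges {G : Multigraph α β} {u v : α} {L : List (β × Bool)}
    (h : IsWalk G u v L) : ∀ s ∈ L, s.1 ∈ G.edges := by
  induction L generalizing u with
  | nil => intro s hs; cases hs
  | cons t L ih =>
    obtain ⟨he, _, hw⟩ := h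
    intro s hs
    rcases List.mem_cons.1 hs with h' | h'
    · subst h'; exact he
    · exact ih hw s h'

lemma isWalk_append {G : Multigraph α β} {u v w : α} {L1 L2 : List (β × Bool)}
    (h1 : IsWalk G u v L1) (h2 : IsWalk G v w L2) : IsWalk G u w (L1 ++ L2) := by
  induction L1 generalizing u with
  | nil => cases h1; exact h2
  | cons s L ih =>
    obtain ⟨he, hh, ht⟩ := h1
    exact ⟨he, hh, ih ht⟩

lemma isWalk_rev {G : Multigraph α β} {u v : α} {L : List (β × Bool)}
    (h : IsWalk G u v L) : IsWalk G v u (revWalk L) := by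
  induction L generalizing u with
  | nil => cases h; exact rfl
  | cons s L ih =>
    obtain ⟨he, hh, ht⟩ := h
    have h1 : revWalk (s :: L) = revWalk L ++ [(s.1, !s.2)] := by simp [revWalk]
    rw [h1]
    refine isWalk_append (ih ht) ⟨he, ?_, ?_⟩
    · rcases s with ⟨e, b⟩; cases b <;> simp [stepHead, stepTail]
    · rcases s with ⟨e, b⟩; cases b <;> simpa [stepHead, stepTail, IsWalk] using hh

lemma isWalk_mono {H G : Multigraph α β} (hs : IsSubgraph H G) {u v : α}
    {L : List (β × Bool)} (h : IsWalk H u v L) : IsWalk G u v L := by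
  induction L generalizing u with
  | nil => exact h
  | cons s L ih =>
    obtain ⟨he, hh, ht⟩ := h
    have hfs := hs.2.2 s.1 he
    have hH : stepHead G s = stepHead H s := by
      rcases s with ⟨e, b⟩; cases b <;> simp [stepHead, hfs.1, hfs.2]
    have hT : stepTail G s = stepTail H s := by
      rcases s with ⟨e, b⟩; cases b <;> simp [stepTail, hfs.1, hfs.2]
    exact ⟨hs.2.1 he, hH.trans hh, hT ▸ ih ht⟩

lemma IsSubgraph.refl (G : Multigraph α β) : IsSubgraph G G :=
  ⟨subset_rfl, subset_rfl, fun _ _ => ⟨rfl, rfl⟩⟩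

lemma IsSubgraph.trans {K H G : Multigraph α β} (h1 : IsSubgraph K H)
    (h2 : IsSubgraph H G) : IsSubgraph K G :=
  ⟨h1.1.trans h2.1, h1.2.1.trans h2.2.1, fun e he =>
    ⟨(h1.2.2 e he).1.trans (h2.2.2 e (h1.2.1 he)).1,
     (h1.2.2 e he).2.trans (h2.2.2 e (h1.2.1 he)).2⟩⟩

lemma balanced_mono {K H : Multigraph α β} {m : β → PM} (h : IsSubgraph K H)
    (hb : Balanced H m) : Balanced K m :=
  fun u L hw => hb u L (isWalk_mono h hw)

lemma pp_mono {K H : Multigraph α β} {m : β → PM} (h : IsSubgraph K H)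
    (hb : PurelyPeriodic H m) : PurelyPeriodic K m :=
  fun u L hw => hb u L (isWalk_mono h hw)

end ReductionAux

section PotentialAux

variable {α β : Type}

lemma gain_of_potential {Γ : Type} [Group Γ] {K : Multigraph α β} {g : β → Γ} {ψ : α → Γ}
    (hpot : ∀ e ∈ K.edges, g e = (ψ (K.fst e))⁻¹ * ψ (K.snd e)) :
    ∀ {u v : α} (L : List (β × Bool)), IsWalk K u v L → gainOf g L = (ψ u)⁻¹ * ψ v := by
  intro u v L
  induction L generalizing u with
  | nil => intro h; cases h; simp [gainOf_nil]
  | cons s L ih =>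
    rintro ⟨he, hh, ht⟩
    rw [gainOf_cons]
    have hstep : (if s.2 then g s.1 else (g s.1)⁻¹)
        = (ψ (stepHead K s))⁻¹ * ψ (stepTail K s) := by
      rcases s with ⟨e, b⟩
      cases b
      · show (g e)⁻¹ = (ψ (K.snd e))⁻¹ * ψ (K.fst e)
        rw [hpot e he]; group
      · show g e = (ψ (K.fst e))⁻¹ * ψ (K.snd e)
        exact hpot e he
    rw [hstep, hh, ih ht]
    group

lemma exists_potential {Γ : Type} [Group Γ] (K : Multigraph α β) (g : β → Γ)
    (h : ∀ u L, IsWalk K u u L → gainOf g L = 1) :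
    ∃ ψ : α → Γ, ∀ e ∈ K.edges, g e = (ψ (K.fst e))⁻¹ * ψ (K.snd e) := by
  classical
  let r : α → α → Prop := fun u v => ∃ L, IsWalk K u v L
  have hrefl : ∀ u, r u u := fun u => ⟨[], rfl⟩
  have hsymm : ∀ {u v}, r u v → r v u := fun h => ⟨revWalk h.choose, isWalk_rev h.choose_spec⟩
  have htrans : ∀ {u v w}, r u v → r v w → r u w := fun h1 h2 =>
    ⟨h1.choose ++ h2.choose, isWalk_append h1.choose_spec h2.choose_spec⟩
  let s : Setoid α := ⟨r, ⟨hrefl, hsymm, htrans⟩⟩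
  let rep : α → α := fun u => (@Quotient.mk α s u).out
  have hrep : ∀ u, r (rep u) u := fun u =>
    @Quotient.exact α s _ _ (Quotient.out_eq (@Quotient.mk α s u))
  let ψ : α → Γ := fun u => gainOf g (hrep u).choose
  refine ⟨ψ, fun e he => ?_⟩
  have hab : r (K.fst e) (K.snd e) := ⟨[(e, true)], ⟨he, rfl, rfl⟩⟩
  have hrepeq : rep (K.fst e) = rep (K.snd e) :=
    congrArg Quotient.out (@Quotient.sound α s _ _ hab)
  have hwa : IsWalk K (rep (K.fst e)) (K.fst e) (hrep (K.fst e)).choose :=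
    (hrep (K.fst e)).choose_spec
  have hwb : IsWalk K (rep (K.snd e)) (K.snd e) (hrep (K.snd e)).choose :=
    (hrep (K.snd e)).choose_spec
  have hwalk : IsWalk K (rep (K.fst e)) (rep (K.fst e))
      ((hrep (K.fst e)).choose ++ ((e, true) :: revWalk (hrep (K.snd e)).choose)) := by
    refine isWalk_append hwa ⟨he, rfl, ?_⟩
    show IsWalk K (K.snd e) (rep (K.fst e)) _
    rw [hrepeq]
    exact isWalk_rev hwb
  have h1 := h _ _ hwalk
  rw [gainOf_append, show ((e, true) :: revWalk (hrep (K.snd e)).choose)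
      = [(e, true)] ++ revWalk (hrep (K.snd e)).choose from rfl,
    gainOf_append, gainOf_single, gainOf_rev] at h1
  simp only [if_pos] at h1
  have h2 : ψ (K.fst e) * (g e * (ψ (K.snd e))⁻¹) = 1 := h1
  have h3 : ψ (K.fst e) * g e = ψ (K.snd e) := by
    rw [← mul_assoc] at h2
    exact mul_inv_eq_one.mp h2
  rw [← h3]; group

/-- The reflection-component homomorphism into `ℤ/2` (multiplicatively). -/
def phiR (a : PM) : Multiplicative (ZMod 2) := Multiplicative.ofAdd (if a.r then 1 else 0)

lemma phiR_mul (a b : PM) : phiR (a * b) = phiR a * phiR b := by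
  have h : (a * b).r = xor a.r b.r := rfl
  simp only [phiR, h, ← ofAdd_add]
  cases ha : a.r <;> cases hb : b.r <;> simp <;> decide

lemma phiR_inv (a : PM) : phiR a⁻¹ = (phiR a)⁻¹ := by
  have h : (a⁻¹).r = a.r := rfl
  simp only [phiR, h, ← ofAdd_neg]
  cases ha : a.r <;> decide

lemma phiR_one : phiR (1 : PM) = 1 := rfl

lemma phiR_congr {a b : PM} (h : a.r = b.r) : phiR a = phiR b := by
  simp [phiR, h]

lemma phiR_eq_one_iff {a : PM} : phiR a = 1 ↔ a.r = false := by
  cases h : a.r <;> simp [phiR, h] <;> decide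

lemma gainOf_phi (g : β → PM) (L : List (β × Bool)) :
    gainOf (fun e => phiR (g e)) L = phiR (gainOf g L) := by
  induction L with
  | nil => simp [gainOf_nil, phiR_one]
  | cons s L ih =>
    rw [gainOf_cons, gainOf_cons, ih, phiR_mul]
    rcases s with ⟨e, b⟩
    cases b <;> simp [phiR_inv]

/-- Constructor for subgraphs with given vertex and edge sets and ambient
endpoint maps. -/
def ofSub (Gb : Multigraph α β) (V : Finset α) (E : Finset β)
    (hV : ∀ e ∈ E, Gb.fst e ∈ V ∧ Gb.snd e ∈ V) : Multigraph α β :=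
  ⟨V, E, Gb.fst, Gb.snd, fun e he => (hV e he).1, fun e he => (hV e he).2⟩

lemma isSubgraph_ofSub (Gb : Multigraph α β) (V : Finset α) (E : Finset β)
    (hV : ∀ e ∈ E, Gb.fst e ∈ V ∧ Gb.snd e ∈ V) (h1 : V ⊆ Gb.verts) (h2 : E ⊆ Gb.edges) :
    IsSubgraph (ofSub Gb V E hV) Gb :=
  ⟨h1, h2, fun _ _ => ⟨rfl, rfl⟩⟩

lemma balanced_update_free [DecidableEq β] {K : Multigraph α β} {m : β → PM} {e₁ : β} {γ : PM}
    (h : e₁ ∉ K.edges) (hb : Balanced K (Function.update m e₁ γ)) : Balanced K m := by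
  intro u L hw
  rw [walkGain_eq_gainOf, gainOf_congr (g' := Function.update m e₁ γ)
    (fun s hs => (Function.update_of_ne (show s.1 ≠ e₁ from fun hse => h (hse ▸ isWalk_edges hw s hs)) γ m).symm),
    ← walkGain_eq_gainOf]
  exact hb u L hw

lemma pp_update_free [DecidableEq β] {K : Multigraph α β} {m : β → PM} {e₁ : β} {γ : PM}
    (h : e₁ ∉ K.edges) (hb : PurelyPeriodic K (Function.update m e₁ γ)) :
    PurelyPeriodic K m := by
  intro u L hw
  rw [walkGain_eq_gainOf, gainOf_congr (g' := Function.update m e₁ γ)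
    (fun s hs => (Function.update_of_ne (show s.1 ≠ e₁ from fun hse => h (hse ▸ isWalk_edges hw s hs)) γ m).symm),
    ← walkGain_eq_gainOf]
  exact hb u L hw

end PotentialAux

section MainAux

variable {α β : Type} [DecidableEq α] [DecidableEq β]

lemma only_three {G : Multigraph α β} {v₀ v₁ v₂ : α} {e₁ e₂ e₃ : β}
    (h01 : v₁ ≠ v₀) (h02 : v₂ ≠ v₀)
    (hdeg : G.degree v₀ = 3)
    (he12 : e₁ ≠ e₂) (he13 : e₁ ≠ e₃) (he23 : e₂ ≠ e₃)
    (hm₁ : e₁ ∈ G.edges) (hm₂ : e₂ ∈ G.edges) (hm₃ : e₃ ∈ G.edges)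
    (hf₁ : G.fst e₁ = v₀) (hs₁ : G.snd e₁ = v₁)
    (hf₂ : G.fst e₂ = v₀) (hs₂ : G.snd e₂ = v₂)
    (hf₃ : G.fst e₃ = v₀) (hs₃ : G.snd e₃ = v₂) :
    ∀ e ∈ G.edges, (G.fst e = v₀ ∨ G.snd e = v₀) → e = e₁ ∨ e = e₂ ∨ e = e₃ := by
  intro e he hinc
  by_contra hcon
  push_neg at hcon
  obtain ⟨hne₁, hne₂, hne₃⟩ := hcon
  set f : β → ℕ := fun x => (if G.fst x = v₀ then 1 else 0) + (if G.snd x = v₀ then 1 else 0)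
    with hf
  have hsub : ({e, e₁, e₂, e₃} : Finset β) ⊆ G.edges := by
    intro x hx
    simp only [Finset.mem_insert, Finset.mem_singleton] at hx
    rcases hx with h|h|h|h <;> subst h <;> assumption
  have hbound : ∀ x ∈ ({e, e₁, e₂, e₃} : Finset β), 1 ≤ f x := by
    intro x hx
    simp only [Finset.mem_insert, Finset.mem_singleton] at hx
    rcases hx with h|h|h|h <;> subst h <;> simp [hf]
    · rcases hinc with h|h <;> simp [h]
    · simp [hf₁]
    · simp [hf₂]
    · simp [hf₃]
  have hcard : ({e, e₁, e₂, e₃} : Finset β).card = 4 := by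
    rw [Finset.card_insert_of_notMem (by simp [hne₁, hne₂, hne₃]),
        Finset.card_insert_of_notMem (by simp [he12, he13]),
        Finset.card_insert_of_notMem (by simp [he23]), Finset.card_singleton]
  have h4 : 4 ≤ ∑ x ∈ ({e, e₁, e₂, e₃} : Finset β), f x := by
    have := Finset.card_nsmul_le_sum ({e, e₁, e₂, e₃} : Finset β) f 1 hbound
    rw [hcard] at this
    simpa using this
  have h5 : ∑ x ∈ ({e, e₁, e₂, e₃} : Finset β), f x ≤ G.degree v₀ :=
    Finset.sum_le_sum_of_subset hsub
  omega

end MainAux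

section Structural

variable {α β : Type} [DecidableEq α] [DecidableEq β]
variable {G : Multigraph α β} {v₀ v₁ v₂ : α} {e₁ e₂ e₃ : β}

lemma gpp_fst : ((G.deleteVertex v₀).addEdge e₁ v₁ v₂).fst = Function.update G.fst e₁ v₁ := rfl
lemma gpp_snd : ((G.deleteVertex v₀).addEdge e₁ v₁ v₂).snd = Function.update G.snd e₁ v₂ := rfl
lemma gpp_verts : ((G.deleteVertex v₀).addEdge e₁ v₁ v₂).verts
    = insert v₁ (insert v₂ (G.verts.erase v₀)) := rfl
lemma gpp_edges : ((G.deleteVertex v₀).addEdge e₁ v₁ v₂).edges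
    = insert e₁ ((G.deleteVertex v₀).edges) := rfl

lemma gpp_mem_edges {e : β} (he : e ∈ ((G.deleteVertex v₀).addEdge e₁ v₁ v₂).edges) :
    e = e₁ ∨ (e ∈ G.edges ∧ G.fst e ≠ v₀ ∧ G.snd e ≠ v₀) := by
  rw [gpp_edges] at he
  rcases Finset.mem_insert.1 he with h | h
  · exact Or.inl h
  · rw [Multigraph.deleteVertex, Finset.mem_filter] at h
    exact Or.inr ⟨h.1, h.2⟩

lemma gpp_verts_subset (hm₁ : e₁ ∈ G.edges) (hs₁ : G.snd e₁ = v₁)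
    (hm₂ : e₂ ∈ G.edges) (hs₂ : G.snd e₂ = v₂) :
    ((G.deleteVertex v₀).addEdge e₁ v₁ v₂).verts ⊆ G.verts := by
  intro x hx
  rw [gpp_verts] at hx
  rcases Finset.mem_insert.1 hx with h | hx
  · exact h ▸ hs₁ ▸ G.snd_mem e₁ hm₁
  rcases Finset.mem_insert.1 hx with h | hx
  · exact h ▸ hs₂ ▸ G.snd_mem e₂ hm₂
  · exact Finset.mem_of_mem_erase hx

lemma gpp_edges_subset (hm₁ : e₁ ∈ G.edges) :
    ((G.deleteVertex v₀).addEdge e₁ v₁ v₂).edges ⊆ G.edges := by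
  intro e he
  rcases gpp_mem_edges he with h | h
  · exact h ▸ hm₁
  · exact h.1

lemma gpp_v₀_not_mem (h01 : v₁ ≠ v₀) (h02 : v₂ ≠ v₀) :
    v₀ ∉ ((G.deleteVertex v₀).addEdge e₁ v₁ v₂).verts := by
  rw [gpp_verts]
  simp only [Finset.mem_insert, not_or]
  exact ⟨fun h => h01 h.symm, fun h => h02 h.symm, Finset.notMem_erase _ _⟩

lemma gpp_e₂_not_mem (he12 : e₁ ≠ e₂) (hf₂ : G.fst e₂ = v₀) :
    e₂ ∉ ((G.deleteVertex v₀).addEdge e₁ v₁ v₂).edges := by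
  intro h
  rcases gpp_mem_edges h with h | h
  · exact he12 h.symm
  · exact h.2.1 hf₂

lemma sub_of_sub'' (hm₁ : e₁ ∈ G.edges) (hs₁ : G.snd e₁ = v₁)
    (hm₂ : e₂ ∈ G.edges) (hs₂ : G.snd e₂ = v₂)
    {K : Multigraph α β} (hK : IsSubgraph K ((G.deleteVertex v₀).addEdge e₁ v₁ v₂))
    (heK : e₁ ∉ K.edges) : IsSubgraph K G := by
  refine ⟨hK.1.trans (gpp_verts_subset hm₁ hs₁ hm₂ hs₂),
    hK.2.1.trans (gpp_edges_subset hm₁), fun e he => ?_⟩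
  have hne : e ≠ e₁ := fun h => heK (h ▸ he)
  obtain ⟨h1, h2⟩ := hK.2.2 e he
  rw [h1, h2, gpp_fst, gpp_snd, Function.update_of_ne hne, Function.update_of_ne hne]
  exact ⟨rfl, rfl⟩

/-- The re-extension of a subgraph of the reduced graph containing the new edge. -/
lemma hat_exists (hv₀ : v₀ ∈ G.verts)
    (hm₁ : e₁ ∈ G.edges) (hm₂ : e₂ ∈ G.edges) (hm₃ : e₃ ∈ G.edges)
    (h01 : v₁ ≠ v₀) (h02 : v₂ ≠ v₀)
    (he12 : e₁ ≠ e₂) (he13 : e₁ ≠ e₃) (he23 : e₂ ≠ e₃)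
    (hf₁ : G.fst e₁ = v₀) (hs₁ : G.snd e₁ = v₁)
    (hf₂ : G.fst e₂ = v₀) (hs₂ : G.snd e₂ = v₂)
    (hf₃ : G.fst e₃ = v₀) (hs₃ : G.snd e₃ = v₂)
    {K : Multigraph α β} (hK : IsSubgraph K ((G.deleteVertex v₀).addEdge e₁ v₁ v₂))
    (he₁K : e₁ ∈ K.edges) :
    ∃ Kh : Multigraph α β, IsSubgraph Kh G ∧
      Kh.verts = insert v₀ K.verts ∧ Kh.edges = insert e₂ (insert e₃ K.edges) ∧
      Kh.fst = G.fst ∧ Kh.snd = G.snd ∧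
      v₀ ∉ K.verts ∧ e₂ ∉ K.edges ∧ e₃ ∉ K.edges ∧
      v₁ ∈ K.verts ∧ v₂ ∈ K.verts ∧ K.fst e₁ = v₁ ∧ K.snd e₁ = v₂ ∧
      (Kh.edges.card : ℤ) = (K.edges.card : ℤ) + 2 ∧
      (Kh.verts.card : ℤ) = (K.verts.card : ℤ) + 1 := by
  have hKf₁ : K.fst e₁ = v₁ := by
    rw [(hK.2.2 e₁ he₁K).1, gpp_fst, Function.update_self]
  have hKs₁ : K.snd e₁ = v₂ := by
    rw [(hK.2.2 e₁ he₁K).2, gpp_snd, Function.update_self]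
  have hv₁K : v₁ ∈ K.verts := hKf₁ ▸ K.fst_mem e₁ he₁K
  have hv₂K : v₂ ∈ K.verts := hKs₁ ▸ K.snd_mem e₁ he₁K
  have hv₀K : v₀ ∉ K.verts := fun h => gpp_v₀_not_mem h01 h02 (hK.1 h)
  have he₂K : e₂ ∉ K.edges := fun h => gpp_e₂_not_mem he12 hf₂ (hK.2.1 h)
  have he₃K : e₃ ∉ K.edges := fun h => gpp_e₂_not_mem he13 hf₃ (hK.2.1 h)
  have hend : ∀ e ∈ insert e₂ (insert e₃ K.edges),
      G.fst e ∈ insert v₀ K.verts ∧ G.snd e ∈ insert v₀ K.verts := by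
    intro e he
    rcases Finset.mem_insert.1 he with h | he
    · subst h
      exact ⟨by rw [hf₂]; exact Finset.mem_insert_self _ _,
        by rw [hs₂]; exact Finset.mem_insert_of_mem hv₂K⟩
    rcases Finset.mem_insert.1 he with h | he
    · subst h
      exact ⟨by rw [hf₃]; exact Finset.mem_insert_self _ _,
        by rw [hs₃]; exact Finset.mem_insert_of_mem hv₂K⟩
    · by_cases h : e = e₁
      · subst h
        exact ⟨by rw [hf₁]; exact Finset.mem_insert_self _ _,
          by rw [hs₁]; exact Finset.mem_insert_of_mem hv₁K⟩
      · have h1 : G.fst e = K.fst e := by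
          rw [(hK.2.2 e he).1, gpp_fst, Function.update_of_ne h]
        have h2 : G.snd e = K.snd e := by
          rw [(hK.2.2 e he).2, gpp_snd, Function.update_of_ne h]
        exact ⟨h1 ▸ Finset.mem_insert_of_mem (K.fst_mem e he),
          h2 ▸ Finset.mem_insert_of_mem (K.snd_mem e he)⟩
  refine ⟨ofSub G (insert v₀ K.verts) (insert e₂ (insert e₃ K.edges)) hend,
    ?_, rfl, rfl, rfl, rfl, hv₀K, he₂K, he₃K, hv₁K, hv₂K, hKf₁, hKs₁, ?_, ?_⟩
  · refine isSubgraph_ofSub _ _ _ _ ?_ ?_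
    · intro x hx
      rcases Finset.mem_insert.1 hx with h | hx
      · exact h ▸ hv₀
      · exact gpp_verts_subset hm₁ hs₁ hm₂ hs₂ (hK.1 hx)
    · intro e he
      rcases Finset.mem_insert.1 he with h | he
      · exact h ▸ hm₂
      rcases Finset.mem_insert.1 he with h | he
      · exact h ▸ hm₃
      · exact gpp_edges_subset hm₁ (hK.2.1 he)
  · show ((insert e₂ (insert e₃ K.edges)).card : ℤ) = _
    rw [Finset.card_insert_of_notMem (by
        simp only [Finset.mem_insert, not_or]
        exact ⟨he23, he₂K⟩),
      Finset.card_insert_of_notMem he₃K]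
    push_cast; ring
  · show ((insert v₀ K.verts).card : ℤ) = _
    rw [Finset.card_insert_of_notMem hv₀K]
    push_cast; ring

end Structural

section CoreLemmas

variable {α β : Type} [DecidableEq α] [DecidableEq β]
variable {G : Multigraph α β} {m : β → PM} {v₀ v₁ v₂ : α} {e₁ e₂ e₃ : β}

lemma hatBound (hT : PMTight G m)
    (hv₀ : v₀ ∈ G.verts)
    (hm₁ : e₁ ∈ G.edges) (hm₂ : e₂ ∈ G.edges) (hm₃ : e₃ ∈ G.edges)
    (h01 : v₁ ≠ v₀) (h02 : v₂ ≠ v₀)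
    (he12 : e₁ ≠ e₂) (he13 : e₁ ≠ e₃) (he23 : e₂ ≠ e₃)
    (hf₁ : G.fst e₁ = v₀) (hs₁ : G.snd e₁ = v₁)
    (hf₂ : G.fst e₂ = v₀) (hs₂ : G.snd e₂ = v₂)
    (hf₃ : G.fst e₃ = v₀) (hs₃ : G.snd e₃ = v₂)
    (hr : (m e₂).r = (m e₃).r)
    {K : Multigraph α β} (hK : IsSubgraph K ((G.deleteVertex v₀).addEdge e₁ v₁ v₂))
    (he₁K : e₁ ∈ K.edges)
    (θ : α → Multiplicative (ZMod 2))
    (hθ : ∀ e ∈ K.edges, (if e = e₁ then (phiR (m e₁))⁻¹ * phiR (m e₂) else phiR (m e))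
      = (θ (K.fst e))⁻¹ * θ (K.snd e)) :
    (K.edges.card : ℤ) ≤ 2 * K.verts.card - 2 := by
  obtain ⟨Kh, hKhG, hKhV, hKhE, hKhf, hKhs, hv₀K, he₂K, he₃K, hv₁K, hv₂K, hKf₁, hKs₁, hce, hcv⟩ :=
    hat_exists hv₀ hm₁ hm₂ hm₃ h01 h02 he12 he13 he23 hf₁ hs₁ hf₂ hs₂ hf₃ hs₃ hK he₁K
  set θh := Function.update θ v₀ (θ v₁ * (phiR (m e₁))⁻¹) with hθhdef
  have hθhv₀ : θh v₀ = θ v₁ * (phiR (m e₁))⁻¹ := Function.update_self _ _ _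
  have hθhK : ∀ x ∈ K.verts, θh x = θ x := fun x hx =>
    Function.update_of_ne (fun h => hv₀K (by rwa [h] at hx)) _ _
  have hrel : (phiR (m e₁))⁻¹ * phiR (m e₂) = (θ v₁)⁻¹ * θ v₂ := by
    have h := hθ e₁ he₁K
    rw [if_pos rfl, hKf₁, hKs₁] at h
    exact h
  have hpot : ∀ e ∈ Kh.edges, phiR (m e) = (θh (Kh.fst e))⁻¹ * θh (Kh.snd e) := by
    intro e he
    rw [hKhf, hKhs]
    rw [hKhE] at he
    rcases Finset.mem_insert.1 he with h | he
    · subst h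
      rw [hf₂, hs₂, hθhv₀, hθhK v₂ hv₂K]
      have hg : (θ v₁ * (phiR (m e₁))⁻¹)⁻¹ * θ v₂ = phiR (m e₁) * ((θ v₁)⁻¹ * θ v₂) := by
        group
      rw [hg, ← hrel]
      group
    rcases Finset.mem_insert.1 he with h | he
    · subst h
      rw [hf₃, hs₃, hθhv₀, hθhK v₂ hv₂K, ← phiR_congr hr]
      have hg : (θ v₁ * (phiR (m e₁))⁻¹)⁻¹ * θ v₂ = phiR (m e₁) * ((θ v₁)⁻¹ * θ v₂) := by
        group
      rw [hg, ← hrel]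
      group
    · by_cases h : e = e₁
      · subst h
        rw [hf₁, hs₁, hθhv₀, hθhK v₁ hv₁K]
        group
      · have hfe : G.fst e = K.fst e := by
          rw [(hK.2.2 e he).1, gpp_fst, Function.update_of_ne h]
        have hse : G.snd e = K.snd e := by
          rw [(hK.2.2 e he).2, gpp_snd, Function.update_of_ne h]
        rw [hfe, hse, hθhK _ (K.fst_mem e he), hθhK _ (K.snd_mem e he)]
        have h2 := hθ e he
        rw [if_neg h] at h2
        exact h2
  have hPP : PurelyPeriodic Kh m := by
    intro u L hw
    have h1 := gain_of_potential hpot L hw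
    rw [gainOf_phi, ← walkGain_eq_gainOf, inv_mul_cancel] at h1
    exact phiR_eq_one_iff.mp h1
  have hsp := hT.2.1 Kh hKhG hPP Kh (IsSubgraph.refl Kh)
    (by rw [hKhE]; exact Finset.card_pos.mpr ⟨e₂, Finset.mem_insert_self _ _⟩)
  push_cast at hsp
  linarith

lemma sparse21'' (hT : PMTight G m)
    (hv₀ : v₀ ∈ G.verts)
    (hm₁ : e₁ ∈ G.edges) (hm₂ : e₂ ∈ G.edges) (hm₃ : e₃ ∈ G.edges)
    (h01 : v₁ ≠ v₀) (h02 : v₂ ≠ v₀)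
    (he12 : e₁ ≠ e₂) (he13 : e₁ ≠ e₃) (he23 : e₂ ≠ e₃)
    (hf₁ : G.fst e₁ = v₀) (hs₁ : G.snd e₁ = v₁)
    (hf₂ : G.fst e₂ = v₀) (hs₂ : G.snd e₂ = v₂)
    (hf₃ : G.fst e₃ = v₀) (hs₃ : G.snd e₃ = v₂) :
    Sparse 2 1 ((G.deleteVertex v₀).addEdge e₁ v₁ v₂) := by
  intro H hH hcard
  by_cases he : e₁ ∈ H.edges
  · obtain ⟨Kh, hKhG, hKhV, hKhE, hKhf, hKhs, hv₀K, he₂K, he₃K, hv₁K, hv₂K, hKf₁, hKs₁, hce, hcv⟩ :=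
      hat_exists hv₀ hm₁ hm₂ hm₃ h01 h02 he12 he13 he23 hf₁ hs₁ hf₂ hs₂ hf₃ hs₃ hH he
    have h1 := hT.1.1 Kh hKhG
      (by rw [hKhE]; exact Finset.card_pos.mpr ⟨e₂, Finset.mem_insert_self _ _⟩)
    push_cast at h1 ⊢
    linarith
  · have h1 := hT.1.1 H (sub_of_sub'' hm₁ hs₁ hm₂ hs₂ hH he) hcard
    push_cast at h1 ⊢
    linarith

lemma count'' (hT : PMTight G m)
    (hv₀ : v₀ ∈ G.verts) (hdeg : G.degree v₀ = 3)
    (hm₁ : e₁ ∈ G.edges) (hm₂ : e₂ ∈ G.edges) (hm₃ : e₃ ∈ G.edges)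
    (h01 : v₁ ≠ v₀) (h02 : v₂ ≠ v₀)
    (he12 : e₁ ≠ e₂) (he13 : e₁ ≠ e₃) (he23 : e₂ ≠ e₃)
    (hf₁ : G.fst e₁ = v₀) (hs₁ : G.snd e₁ = v₁)
    (hf₂ : G.fst e₂ = v₀) (hs₂ : G.snd e₂ = v₂)
    (hf₃ : G.fst e₃ = v₀) (hs₃ : G.snd e₃ = v₂) :
    ((((G.deleteVertex v₀).addEdge e₁ v₁ v₂).edges.card : ℤ))
      = 2 * (((G.deleteVertex v₀).addEdge e₁ v₁ v₂).verts.card : ℤ) - 1 := by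
  have honly := only_three h01 h02 hdeg he12 he13 he23 hm₁ hm₂ hm₃ hf₁ hs₁ hf₂ hs₂ hf₃ hs₃
  have hfilter : (G.deleteVertex v₀).edges = G.edges \ {e₁, e₂, e₃} := by
    ext e
    simp only [Multigraph.deleteVertex, Finset.mem_filter, Finset.mem_sdiff,
      Finset.mem_insert, Finset.mem_singleton]
    constructor
    · rintro ⟨he, hne⟩
      refine ⟨he, ?_⟩
      rintro (h | h | h) <;> subst h
      · exact hne.1 hf₁
      · exact hne.1 hf₂
      · exact hne.1 hf₃
    · rintro ⟨he, hne⟩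
      refine ⟨he, ?_, ?_⟩
      · intro h
        exact hne (honly e he (Or.inl h))
      · intro h
        exact hne (honly e he (Or.inr h))
  have htriple : ({e₁, e₂, e₃} : Finset β) ⊆ G.edges := by
    intro x hx
    simp only [Finset.mem_insert, Finset.mem_singleton] at hx
    rcases hx with h|h|h <;> subst h <;> assumption
  have hc3 : ({e₁, e₂, e₃} : Finset β).card = 3 := by
    rw [Finset.card_insert_of_notMem (by simp [he12, he13]),
      Finset.card_insert_of_notMem (by simp [he23]), Finset.card_singleton]
  have hcE : (((G.deleteVertex v₀).addEdge e₁ v₁ v₂).edges.card : ℤ)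
      = (G.edges.card : ℤ) - 2 := by
    rw [gpp_edges, Finset.card_insert_of_notMem (by
      rw [hfilter]
      simp), hfilter, Finset.card_sdiff_of_subset htriple, hc3]
    have : 3 ≤ G.edges.card := by
      calc 3 = ({e₁, e₂, e₃} : Finset β).card := hc3.symm
      _ ≤ G.edges.card := Finset.card_le_card htriple
    push_cast [Nat.cast_sub this]
    ring
  have hverts : ((G.deleteVertex v₀).addEdge e₁ v₁ v₂).verts = G.verts.erase v₀ := by
    have hv₂e : insert v₂ (G.verts.erase v₀) = G.verts.erase v₀ :=
      Finset.insert_eq_self.mpr (Finset.mem_erase.mpr ⟨h02, hs₂ ▸ G.snd_mem e₂ hm₂⟩)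
    have hv₁e : insert v₁ (G.verts.erase v₀) = G.verts.erase v₀ :=
      Finset.insert_eq_self.mpr (Finset.mem_erase.mpr ⟨h01, hs₁ ▸ G.snd_mem e₁ hm₁⟩)
    rw [gpp_verts, hv₂e, hv₁e]
  have hcV : ((((G.deleteVertex v₀).addEdge e₁ v₁ v₂).verts.card : ℤ))
      = (G.verts.card : ℤ) - 1 := by
    rw [hverts, Finset.card_erase_of_mem hv₀]
    have : 1 ≤ G.verts.card := Finset.card_pos.mpr ⟨v₀, hv₀⟩
    push_cast [Nat.cast_sub this]
    ring
  have hTeq := hT.1.2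
  push_cast at hTeq
  rw [hcE, hcV]
  linarith

lemma ppcond'' (hT : PMTight G m)
    (hv₀ : v₀ ∈ G.verts)
    (hm₁ : e₁ ∈ G.edges) (hm₂ : e₂ ∈ G.edges) (hm₃ : e₃ ∈ G.edges)
    (h01 : v₁ ≠ v₀) (h02 : v₂ ≠ v₀)
    (he12 : e₁ ≠ e₂) (he13 : e₁ ≠ e₃) (he23 : e₂ ≠ e₃)
    (hf₁ : G.fst e₁ = v₀) (hs₁ : G.snd e₁ = v₁)
    (hf₂ : G.fst e₂ = v₀) (hs₂ : G.snd e₂ = v₂)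
    (hf₃ : G.fst e₃ = v₀) (hs₃ : G.snd e₃ = v₂)
    (hr : (m e₂).r = (m e₃).r)
    (γ : PM) (hγ : phiR γ = (phiR (m e₁))⁻¹ * phiR (m e₂)) :
    ∀ H : Multigraph α β, IsSubgraph H ((G.deleteVertex v₀).addEdge e₁ v₁ v₂) →
      PurelyPeriodic H (Function.update m e₁ γ) → Sparse 2 2 H := by
  intro H hH hPP K hKH hc
  have hK : IsSubgraph K ((G.deleteVertex v₀).addEdge e₁ v₁ v₂) := hKH.trans hH
  have hPPK : PurelyPeriodic K (Function.update m e₁ γ) := pp_mono hKH hPP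
  by_cases he : e₁ ∈ K.edges
  · have hclosed : ∀ u L, IsWalk K u u L →
        gainOf (fun e => phiR (Function.update m e₁ γ e)) L = 1 := by
      intro u L hw
      rw [gainOf_phi, ← walkGain_eq_gainOf]
      exact phiR_eq_one_iff.mpr (hPPK u L hw)
    obtain ⟨θ, hθ⟩ := exists_potential K _ hclosed
    have hθ' : ∀ e ∈ K.edges, (if e = e₁ then (phiR (m e₁))⁻¹ * phiR (m e₂) else phiR (m e))
        = (θ (K.fst e))⁻¹ * θ (K.snd e) := by
      intro e heK
      have h2 := hθ e heK
      rw [Function.update_apply] at h2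
      by_cases h : e = e₁
      · rw [if_pos h] at h2 ⊢
        rw [← hγ]
        exact h2
      · rw [if_neg h] at h2 ⊢
        exact h2
    exact hatBound hT hv₀ hm₁ hm₂ hm₃ h01 h02 he12 he13 he23 hf₁ hs₁ hf₂ hs₂ hf₃ hs₃ hr
      hK he θ hθ'
  · have hKG : IsSubgraph K G := sub_of_sub'' hm₁ hs₁ hm₂ hs₂ hK he
    have hPPm : PurelyPeriodic K m := pp_update_free he hPPK
    exact hT.2.1 K hKG hPPm K (IsSubgraph.refl K) hc

end CoreLemmas

section GlueAux

lemma comm_glue {Γ : Type} [CommGroup Γ] (R x y : Γ) : (y * R) * (y⁻¹ * x) = x * R := by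
  calc (y * R) * (y⁻¹ * x) = (R * y) * (y⁻¹ * x) := by rw [mul_comm y R]
    _ = R * (y * (y⁻¹ * x)) := by rw [mul_assoc]
    _ = R * x := by rw [mul_inv_cancel_left]
    _ = x * R := mul_comm _ _

lemma comm_cancel {Γ : Type} [CommGroup Γ] (x y c : Γ) : (x * c)⁻¹ * (y * c) = x⁻¹ * y := by
  calc (x * c)⁻¹ * (y * c) = c⁻¹ * x⁻¹ * (y * c) := by rw [mul_inv_rev]
    _ = x⁻¹ * y * (c⁻¹ * c) := by
        rw [mul_comm (c⁻¹) (x⁻¹), mul_assoc, mul_assoc]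
        rw [mul_comm (c⁻¹) (y * c), mul_assoc, mul_comm c (c⁻¹)]
    _ = x⁻¹ * y := by rw [inv_mul_cancel, mul_one]

end GlueAux

/-- If the two parallel edges at a degree-3 vertex with two
neighbours have the same `𝒞ₛ`-component, then one of the two non-loop
1-reductions preserves `ℤ²⋊𝒞ₛ`-tightness. -/
theorem sameCs_twoNeighbour_reduction {α β : Type} [DecidableEq α] [DecidableEq β]
    (G : Multigraph α β) (m : β → PM) (hGm : IsGainGraph G m) (hT : PMTight G m)
    (v₀ v₁ v₂ : α) (h01 : v₁ ≠ v₀) (h02 : v₂ ≠ v₀) (h12 : v₁ ≠ v₂)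
    (hv₀ : v₀ ∈ G.verts) (hdeg : G.degree v₀ = 3)
    (e₁ e₂ e₃ : β) (he12 : e₁ ≠ e₂) (he13 : e₁ ≠ e₃) (he23 : e₂ ≠ e₃)
    (hm₁ : e₁ ∈ G.edges) (hm₂ : e₂ ∈ G.edges) (hm₃ : e₃ ∈ G.edges)
    (hf₁ : G.fst e₁ = v₀) (hs₁ : G.snd e₁ = v₁)
    (hf₂ : G.fst e₂ = v₀) (hs₂ : G.snd e₂ = v₂)
    (hf₃ : G.fst e₃ = v₀) (hs₃ : G.snd e₃ = v₂)
    (hr : (m e₂).r = (m e₃).r) :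
    PMTight ((G.deleteVertex v₀).addEdge e₁ v₁ v₂)
        (Function.update m e₁ ((m e₁)⁻¹ * m e₂)) ∨
      PMTight ((G.deleteVertex v₀).addEdge e₁ v₁ v₂)
        (Function.update m e₁ ((m e₁)⁻¹ * m e₃)) := by
  classical
  by_contra hcon
  push_neg at hcon
  obtain ⟨hncase₂, hncase₃⟩ := hcon
  have hm₂₃ : m e₂ ≠ m e₃ :=
    hGm.parallel_ne e₂ hm₂ e₃ hm₃ he23 (hf₂.trans hf₃.symm) (hs₂.trans hs₃.symm)
  have hphir23 : phiR (m e₂) = phiR (m e₃) := phiR_congr hr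
  have htight : Tight 2 1 ((G.deleteVertex v₀).addEdge e₁ v₁ v₂) :=
    ⟨sparse21'' hT hv₀ hm₁ hm₂ hm₃ h01 h02 he12 he13 he23 hf₁ hs₁ hf₂ hs₂ hf₃ hs₃,
     count'' hT hv₀ hdeg hm₁ hm₂ hm₃ h01 h02 he12 he13 he23 hf₁ hs₁ hf₂ hs₂ hf₃ hs₃⟩
  have hγ₂ : phiR ((m e₁)⁻¹ * m e₂) = (phiR (m e₁))⁻¹ * phiR (m e₂) := by
    rw [phiR_mul, phiR_inv]
  have hγ₃ : phiR ((m e₁)⁻¹ * m e₃) = (phiR (m e₁))⁻¹ * phiR (m e₂) := by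
    rw [phiR_mul, phiR_inv, hphir23]
  have hpp₂ := ppcond'' hT hv₀ hm₁ hm₂ hm₃ h01 h02 he12 he13 he23 hf₁ hs₁ hf₂ hs₂ hf₃ hs₃
      hr ((m e₁)⁻¹ * m e₂) hγ₂
  have hpp₃ := ppcond'' hT hv₀ hm₁ hm₂ hm₃ h01 h02 he12 he13 he23 hf₁ hs₁ hf₂ hs₂ hf₃ hs₃
      hr ((m e₁)⁻¹ * m e₃) hγ₃
  -- extract a balanced blocker for the first reduction
  have hnb₂ : ¬ ∀ H : Multigraph α β, IsSubgraph H ((G.deleteVertex v₀).addEdge e₁ v₁ v₂) →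
      Balanced H (Function.update m e₁ ((m e₁)⁻¹ * m e₂)) → Sparse 2 3 H :=
    fun h => hncase₂ ⟨htight, hpp₂, h⟩
  have hnb₃ : ¬ ∀ H : Multigraph α β, IsSubgraph H ((G.deleteVertex v₀).addEdge e₁ v₁ v₂) →
      Balanced H (Function.update m e₁ ((m e₁)⁻¹ * m e₃)) → Sparse 2 3 H :=
    fun h => hncase₃ ⟨htight, hpp₃, h⟩
  unfold Sparse at hnb₂ hnb₃
  push_neg at hnb₂ hnb₃
  obtain ⟨H₂, hH₂sub, hH₂bal, K, hKH₂, hKc, hKgt⟩ := hnb₂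
  obtain ⟨H₃, hH₃sub, hH₃bal, K', hKH₃, hKc', hKgt'⟩ := hnb₃
  push_cast at hKgt hKgt'
  have hK₂ : IsSubgraph K ((G.deleteVertex v₀).addEdge e₁ v₁ v₂) := hKH₂.trans hH₂sub
  have hK₃ : IsSubgraph K' ((G.deleteVertex v₀).addEdge e₁ v₁ v₂) := hKH₃.trans hH₃sub
  have hKbal : Balanced K (Function.update m e₁ ((m e₁)⁻¹ * m e₂)) := balanced_mono hKH₂ hH₂bal
  have hK'bal : Balanced K' (Function.update m e₁ ((m e₁)⁻¹ * m e₃)) := balanced_mono hKH₃ hH₃bal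
  have he₁K : e₁ ∈ K.edges := by
    by_contra hne
    have h1 := hT.2.2 K (sub_of_sub'' hm₁ hs₁ hm₂ hs₂ hK₂ hne)
      (balanced_update_free hne hKbal) K (IsSubgraph.refl K) hKc
    push_cast at h1
    linarith
  have he₁K' : e₁ ∈ K'.edges := by
    by_contra hne
    have h1 := hT.2.2 K' (sub_of_sub'' hm₁ hs₁ hm₂ hs₂ hK₃ hne)
      (balanced_update_free hne hK'bal) K' (IsSubgraph.refl K') hKc'
    push_cast at h1
    linarith
  -- potentials
  have hclosed₂ : ∀ u L, IsWalk K u u L →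
      gainOf (fun e => phiR (Function.update m e₁ ((m e₁)⁻¹ * m e₂) e)) L = 1 := by
    intro u L hw
    rw [gainOf_phi, ← walkGain_eq_gainOf, hKbal u L hw, phiR_one]
  have hclosed₃ : ∀ u L, IsWalk K' u u L →
      gainOf (fun e => phiR (Function.update m e₁ ((m e₁)⁻¹ * m e₃) e)) L = 1 := by
    intro u L hw
    rw [gainOf_phi, ← walkGain_eq_gainOf, hK'bal u L hw, phiR_one]
  obtain ⟨θ, hθraw⟩ := exists_potential K _ hclosed₂
  obtain ⟨θ', hθ'raw⟩ := exists_potential K' _ hclosed₃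
  have hθ : ∀ e ∈ K.edges,
      (if e = e₁ then (phiR (m e₁))⁻¹ * phiR (m e₂) else phiR (m e))
        = (θ (K.fst e))⁻¹ * θ (K.snd e) := by
    intro e heK
    have h2 := hθraw e heK
    rw [Function.update_apply] at h2
    by_cases h : e = e₁
    · rw [if_pos h] at h2 ⊢
      rw [← hγ₂]
      exact h2
    · rw [if_neg h] at h2 ⊢
      exact h2
  have hθ' : ∀ e ∈ K'.edges,
      (if e = e₁ then (phiR (m e₁))⁻¹ * phiR (m e₂) else phiR (m e))
        = (θ' (K'.fst e))⁻¹ * θ' (K'.snd e) := by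
    intro e heK
    have h2 := hθ'raw e heK
    rw [Function.update_apply] at h2
    by_cases h : e = e₁
    · rw [if_pos h] at h2 ⊢
      rw [← hγ₃]
      exact h2
    · rw [if_neg h] at h2 ⊢
      exact h2
  have hKle := hatBound hT hv₀ hm₁ hm₂ hm₃ h01 h02 he12 he13 he23 hf₁ hs₁ hf₂ hs₂ hf₃ hs₃
      hr hK₂ he₁K θ hθ
  have hK'le := hatBound hT hv₀ hm₁ hm₂ hm₃ h01 h02 he12 he13 he23 hf₁ hs₁ hf₂ hs₂ hf₃ hs₃
      hr hK₃ he₁K' θ' hθ'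
  have hEK : (K.edges.card : ℤ) = 2 * K.verts.card - 2 := by linarith
  have hEK' : (K'.edges.card : ℤ) = 2 * K'.verts.card - 2 := by linarith
  -- endpoint facts
  have hKf₁ : K.fst e₁ = v₁ := by
    rw [(hK₂.2.2 e₁ he₁K).1, gpp_fst, Function.update_self]
  have hKs₁ : K.snd e₁ = v₂ := by
    rw [(hK₂.2.2 e₁ he₁K).2, gpp_snd, Function.update_self]
  have hK'f₁ : K'.fst e₁ = v₁ := by
    rw [(hK₃.2.2 e₁ he₁K').1, gpp_fst, Function.update_self]
  have hK's₁ : K'.snd e₁ = v₂ := by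
    rw [(hK₃.2.2 e₁ he₁K').2, gpp_snd, Function.update_self]
  have hv₁K : v₁ ∈ K.verts := hKf₁ ▸ K.fst_mem e₁ he₁K
  have hv₂K : v₂ ∈ K.verts := hKs₁ ▸ K.snd_mem e₁ he₁K
  have hv₁K' : v₁ ∈ K'.verts := hK'f₁ ▸ K'.fst_mem e₁ he₁K'
  have hv₂K' : v₂ ∈ K'.verts := hK's₁ ▸ K'.snd_mem e₁ he₁K'
  -- the intersection graph minus e₁
  have hBmend : ∀ e ∈ (K.edges ∩ K'.edges).erase e₁,
      ((G.deleteVertex v₀).addEdge e₁ v₁ v₂).fst e ∈ K.verts ∩ K'.verts ∧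
      ((G.deleteVertex v₀).addEdge e₁ v₁ v₂).snd e ∈ K.verts ∩ K'.verts := by
    intro e he
    obtain ⟨heK, heK'⟩ := Finset.mem_inter.1 (Finset.mem_of_mem_erase he)
    exact ⟨Finset.mem_inter.2 ⟨(hK₂.2.2 e heK).1 ▸ K.fst_mem e heK,
        (hK₃.2.2 e heK').1 ▸ K'.fst_mem e heK'⟩,
      Finset.mem_inter.2 ⟨(hK₂.2.2 e heK).2 ▸ K.snd_mem e heK,
        (hK₃.2.2 e heK').2 ▸ K'.snd_mem e heK'⟩⟩
  set Bm : Multigraph α β := ofSub ((G.deleteVertex v₀).addEdge e₁ v₁ v₂)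
    (K.verts ∩ K'.verts) ((K.edges ∩ K'.edges).erase e₁) hBmend with hBmdef
  have hBmK : IsSubgraph Bm K := by
    refine ⟨Finset.inter_subset_left, ?_, ?_⟩
    · intro e he
      exact Finset.inter_subset_left (Finset.mem_of_mem_erase he)
    · intro e he
      have heK : e ∈ K.edges := Finset.inter_subset_left (Finset.mem_of_mem_erase he)
      exact ⟨(hK₂.2.2 e heK).1.symm, (hK₂.2.2 e heK).2.symm⟩
  have hBmK' : IsSubgraph Bm K' := by
    refine ⟨Finset.inter_subset_right, ?_, ?_⟩
    · intro e he
      exact Finset.inter_subset_right (Finset.mem_of_mem_erase he)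
    · intro e he
      have heK : e ∈ K'.edges := Finset.inter_subset_right (Finset.mem_of_mem_erase he)
      exact ⟨(hK₃.2.2 e heK).1.symm, (hK₃.2.2 e heK).2.symm⟩
  -- reachable set from v₁ in Bm
  set S : Finset α := (K.verts ∩ K'.verts).filter (fun u => ∃ L, IsWalk Bm v₁ u L) with hSdef
  have hv₁S : v₁ ∈ S :=
    Finset.mem_filter.2 ⟨Finset.mem_inter.2 ⟨hv₁K, hv₁K'⟩, ⟨[], rfl⟩⟩
  have hv₂S : v₂ ∉ S := by
    intro hmem
    obtain ⟨-, W, hW⟩ := Finset.mem_filter.1 hmem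
    have hWnoe₁ : ∀ s ∈ W, s.1 ≠ e₁ := by
      intro s hs h
      have hmem : s.1 ∈ (K.edges ∩ K'.edges).erase e₁ := isWalk_edges hW s hs
      rw [h] at hmem
      exact Finset.notMem_erase _ _ hmem
    have hWK : IsWalk K v₁ v₂ W := isWalk_mono hBmK hW
    have hWK' : IsWalk K' v₁ v₂ W := isWalk_mono hBmK' hW
    have hstepK : IsWalk K v₂ v₁ [(e₁, false)] := ⟨he₁K, hKs₁, hKf₁⟩
    have hstepK' : IsWalk K' v₂ v₁ [(e₁, false)] := ⟨he₁K', hK's₁, hK'f₁⟩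
    have hclK := hKbal v₁ _ (isWalk_append hWK hstepK)
    have hclK' := hK'bal v₁ _ (isWalk_append hWK' hstepK')
    rw [walkGain_eq_gainOf, gainOf_append, gainOf_single] at hclK hclK'
    simp only [Bool.false_eq_true, if_false] at hclK hclK'
    have hgW₂ : gainOf (Function.update m e₁ ((m e₁)⁻¹ * m e₂)) W = gainOf m W :=
      gainOf_congr fun s hs => Function.update_of_ne (hWnoe₁ s hs) _ _
    have hgW₃ : gainOf (Function.update m e₁ ((m e₁)⁻¹ * m e₃)) W = gainOf m W :=
      gainOf_congr fun s hs => Function.update_of_ne (hWnoe₁ s hs) _ _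
    rw [hgW₂, Function.update_self] at hclK
    rw [hgW₃, Function.update_self] at hclK'
    have h2 : gainOf m W = (m e₁)⁻¹ * m e₂ := mul_inv_eq_one.mp hclK
    have h3 : gainOf m W = (m e₁)⁻¹ * m e₃ := mul_inv_eq_one.mp hclK'
    exact hm₂₃ (mul_left_cancel (h2.symm.trans h3))
  -- edges do not cross S
  have hcrossF : ∀ e ∈ (K.edges ∩ K'.edges).erase e₁,
      ((G.deleteVertex v₀).addEdge e₁ v₁ v₂).fst e ∈ S →
      ((G.deleteVertex v₀).addEdge e₁ v₁ v₂).snd e ∈ S := by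
    intro e he hf
    obtain ⟨hv, W, hW⟩ := Finset.mem_filter.1 hf
    exact Finset.mem_filter.2 ⟨(hBmend e he).2,
      ⟨W ++ [(e, true)], isWalk_append hW ⟨he, rfl, rfl⟩⟩⟩
  have hcrossS : ∀ e ∈ (K.edges ∩ K'.edges).erase e₁,
      ((G.deleteVertex v₀).addEdge e₁ v₁ v₂).snd e ∈ S →
      ((G.deleteVertex v₀).addEdge e₁ v₁ v₂).fst e ∈ S := by
    intro e he hf
    obtain ⟨hv, W, hW⟩ := Finset.mem_filter.1 hf
    exact Finset.mem_filter.2 ⟨(hBmend e he).1,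
      ⟨W ++ [(e, false)], isWalk_append hW ⟨he, rfl, rfl⟩⟩⟩
  -- the two sides of the partition
  have hB₁end : ∀ e ∈ ((K.edges ∩ K'.edges).erase e₁).filter
      (fun e => ((G.deleteVertex v₀).addEdge e₁ v₁ v₂).fst e ∈ S),
      ((G.deleteVertex v₀).addEdge e₁ v₁ v₂).fst e ∈ S ∧
      ((G.deleteVertex v₀).addEdge e₁ v₁ v₂).snd e ∈ S := by
    intro e he
    obtain ⟨h1, h2⟩ := Finset.mem_filter.1 he
    exact ⟨h2, hcrossF e h1 h2⟩
  set B₁ : Multigraph α β := ofSub ((G.deleteVertex v₀).addEdge e₁ v₁ v₂) S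
    (((K.edges ∩ K'.edges).erase e₁).filter
      (fun e => ((G.deleteVertex v₀).addEdge e₁ v₁ v₂).fst e ∈ S)) hB₁end with hB₁def
  have hB₂end : ∀ e ∈ ((K.edges ∩ K'.edges).erase e₁).filter
      (fun e => ¬ ((G.deleteVertex v₀).addEdge e₁ v₁ v₂).fst e ∈ S),
      ((G.deleteVertex v₀).addEdge e₁ v₁ v₂).fst e ∈ (K.verts ∩ K'.verts) \ S ∧
      ((G.deleteVertex v₀).addEdge e₁ v₁ v₂).snd e ∈ (K.verts ∩ K'.verts) \ S := by
    intro e he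
    obtain ⟨h1, h2⟩ := Finset.mem_filter.1 he
    exact ⟨Finset.mem_sdiff.2 ⟨(hBmend e h1).1, h2⟩,
      Finset.mem_sdiff.2 ⟨(hBmend e h1).2, fun hs => h2 (hcrossS e h1 hs)⟩⟩
  set B₂ : Multigraph α β := ofSub ((G.deleteVertex v₀).addEdge e₁ v₁ v₂)
    ((K.verts ∩ K'.verts) \ S)
    (((K.edges ∩ K'.edges).erase e₁).filter
      (fun e => ¬ ((G.deleteVertex v₀).addEdge e₁ v₁ v₂).fst e ∈ S)) hB₂end with hB₂def
  have hB₁K : IsSubgraph B₁ K := by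
    refine ⟨(Finset.filter_subset _ _).trans Finset.inter_subset_left, ?_, ?_⟩
    · intro e he
      exact Finset.inter_subset_left
        (Finset.mem_of_mem_erase ((Finset.filter_subset _ _) he))
    · intro e he
      have heK : e ∈ K.edges := Finset.inter_subset_left
        (Finset.mem_of_mem_erase ((Finset.filter_subset _ _) he))
      exact ⟨(hK₂.2.2 e heK).1.symm, (hK₂.2.2 e heK).2.symm⟩
  have hB₂K : IsSubgraph B₂ K := by
    refine ⟨Finset.sdiff_subset.trans Finset.inter_subset_left, ?_, ?_⟩
    · intro e he
      exact Finset.inter_subset_left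
        (Finset.mem_of_mem_erase ((Finset.filter_subset _ _) he))
    · intro e he
      have heK : e ∈ K.edges := Finset.inter_subset_left
        (Finset.mem_of_mem_erase ((Finset.filter_subset _ _) he))
      exact ⟨(hK₂.2.2 e heK).1.symm, (hK₂.2.2 e heK).2.symm⟩
  -- the balanced-subgraph bound
  have hbound23 : ∀ C : Multigraph α β, IsSubgraph C K → e₁ ∉ C.edges →
      1 ≤ C.edges.card → (C.edges.card : ℤ) ≤ 2 * C.verts.card - 3 := by
    intro C hCK hne hc
    have hCG : IsSubgraph C G := sub_of_sub'' hm₁ hs₁ hm₂ hs₂ (hCK.trans hK₂) hne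
    have hCbal : Balanced C m := balanced_update_free hne (balanced_mono hCK hKbal)
    have h1 := hT.2.2 C hCG hCbal C (IsSubgraph.refl C) hc
    push_cast at h1
    exact h1
  -- cardinality bookkeeping
  have he₁B : e₁ ∈ K.edges ∩ K'.edges := Finset.mem_inter.2 ⟨he₁K, he₁K'⟩
  have hinter1 : 1 ≤ (K.edges ∩ K'.edges).card := Finset.card_pos.mpr ⟨e₁, he₁B⟩
  have hsplit : B₁.edges.card + B₂.edges.card = ((K.edges ∩ K'.edges).erase e₁).card := by
    rw [hB₁def, hB₂def]
    exact Finset.card_filter_add_card_filter_not _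
  have heraseZ : (((K.edges ∩ K'.edges).erase e₁).card : ℤ)
      = ((K.edges ∩ K'.edges).card : ℤ) - 1 := by
    rw [Finset.card_erase_of_mem he₁B, Nat.cast_sub hinter1, Nat.cast_one]
  have hvsplit : ((K.verts ∩ K'.verts) \ S).card + S.card = (K.verts ∩ K'.verts).card :=
    Finset.card_sdiff_add_card_eq_card (Finset.filter_subset _ _)
  have hcE : (K.edges ∪ K'.edges).card + (K.edges ∩ K'.edges).card
      = K.edges.card + K'.edges.card := Finset.card_union_add_card_inter _ _
  have hcV : (K.verts ∪ K'.verts).card + (K.verts ∩ K'.verts).card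
      = K.verts.card + K'.verts.card := Finset.card_union_add_card_inter _ _
  -- the union graph
  have hUend : ∀ e ∈ K.edges ∪ K'.edges,
      ((G.deleteVertex v₀).addEdge e₁ v₁ v₂).fst e ∈ K.verts ∪ K'.verts ∧
      ((G.deleteVertex v₀).addEdge e₁ v₁ v₂).snd e ∈ K.verts ∪ K'.verts := by
    intro e he
    rcases Finset.mem_union.1 he with h | h
    · exact ⟨Finset.mem_union_left _ ((hK₂.2.2 e h).1 ▸ K.fst_mem e h),
        Finset.mem_union_left _ ((hK₂.2.2 e h).2 ▸ K.snd_mem e h)⟩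
    · exact ⟨Finset.mem_union_right _ ((hK₃.2.2 e h).1 ▸ K'.fst_mem e h),
        Finset.mem_union_right _ ((hK₃.2.2 e h).2 ▸ K'.snd_mem e h)⟩
  set U : Multigraph α β := ofSub ((G.deleteVertex v₀).addEdge e₁ v₁ v₂)
    (K.verts ∪ K'.verts) (K.edges ∪ K'.edges) hUend with hUdef
  have hUsub : IsSubgraph U ((G.deleteVertex v₀).addEdge e₁ v₁ v₂) :=
    isSubgraph_ofSub _ _ _ _ (Finset.union_subset hK₂.1 hK₃.1)
      (Finset.union_subset hK₂.2.1 hK₃.2.1)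
  have hUe : ((K.edges ∪ K'.edges).card : ℤ) ≤ 2 * ((K.verts ∪ K'.verts).card : ℤ) - 1 := by
    have h1 := htight.1 U hUsub
      (Finset.card_pos.mpr ⟨e₁, Finset.mem_union_left _ he₁K⟩)
    rw [hUdef] at h1
    push_cast at h1
    exact h1
  have hcEZ : ((K.edges ∪ K'.edges).card : ℤ) + ((K.edges ∩ K'.edges).card : ℤ)
      = (K.edges.card : ℤ) + (K'.edges.card : ℤ) := by exact_mod_cast hcE
  have hcVZ : ((K.verts ∪ K'.verts).card : ℤ) + ((K.verts ∩ K'.verts).card : ℤ)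
      = (K.verts.card : ℤ) + (K'.verts.card : ℤ) := by exact_mod_cast hcV
  have hEBge : ((K.edges ∩ K'.edges).card : ℤ)
      ≥ 2 * ((K.verts ∩ K'.verts).card : ℤ) - 3 := by linarith
  -- forcing
  have hs1 : 1 ≤ S.card := Finset.card_pos.mpr ⟨v₁, hv₁S⟩
  have ht1 : 1 ≤ ((K.verts ∩ K'.verts) \ S).card := Finset.card_pos.mpr
    ⟨v₂, Finset.mem_sdiff.2 ⟨Finset.mem_inter.2 ⟨hv₂K, hv₂K'⟩, hv₂S⟩⟩
  have hsplitZ : (B₁.edges.card : ℤ) + (B₂.edges.card : ℤ)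
      = ((K.edges ∩ K'.edges).card : ℤ) - 1 := by
    rw [← heraseZ]
    exact_mod_cast hsplit
  have hvsplitZ : (((K.verts ∩ K'.verts) \ S).card : ℤ) + (S.card : ℤ)
      = ((K.verts ∩ K'.verts).card : ℤ) := by exact_mod_cast hvsplit
  have hne₁B₁ : e₁ ∉ B₁.edges := fun h =>
    Finset.notMem_erase e₁ (K.edges ∩ K'.edges) ((Finset.filter_subset _ _) h)
  have hne₁B₂ : e₁ ∉ B₂.edges := fun h =>
    Finset.notMem_erase e₁ (K.edges ∩ K'.edges) ((Finset.filter_subset _ _) h)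
  have hB₁verts : B₁.verts = S := rfl
  have hB₂verts : B₂.verts = (K.verts ∩ K'.verts) \ S := rfl
  have hB₁le : (B₁.edges.card : ℤ) ≤ 2 * (S.card : ℤ) - 2 := by
    rcases Nat.eq_zero_or_pos B₁.edges.card with h0 | hpos
    · rw [h0]
      have : (1 : ℤ) ≤ (S.card : ℤ) := by exact_mod_cast hs1
      push_cast
      linarith
    · have h1 := hbound23 B₁ hB₁K hne₁B₁ hpos
      rw [hB₁verts] at h1
      linarith
  have hB₂le : (B₂.edges.card : ℤ) ≤ 2 * (((K.verts ∩ K'.verts) \ S).card : ℤ) - 2 := by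
    rcases Nat.eq_zero_or_pos B₂.edges.card with h0 | hpos
    · rw [h0]
      have : (1 : ℤ) ≤ (((K.verts ∩ K'.verts) \ S).card : ℤ) := by exact_mod_cast ht1
      push_cast
      linarith
    · have h1 := hbound23 B₂ hB₂K hne₁B₂ hpos
      rw [hB₂verts] at h1
      linarith
  have ha0 : B₁.edges.card = 0 := by
    by_contra h
    have hpos : 1 ≤ B₁.edges.card := Nat.pos_of_ne_zero h
    have h1 := hbound23 B₁ hB₁K hne₁B₁ hpos
    rw [hB₁verts] at h1
    linarith
  have hb0 : B₂.edges.card = 0 := by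
    by_contra h
    have hpos : 1 ≤ B₂.edges.card := Nat.pos_of_ne_zero h
    have h1 := hbound23 B₂ hB₂K hne₁B₂ hpos
    rw [hB₂verts] at h1
    linarith
  have hEB1 : ((K.edges ∩ K'.edges).card : ℤ) = 1 := by
    rw [ha0, hb0] at hsplitZ
    push_cast at hsplitZ
    linarith
  have hsub12 : ({v₁, v₂} : Finset α) ⊆ K.verts ∩ K'.verts := by
    intro x hx
    rcases Finset.mem_insert.1 hx with h | h
    · subst h; exact Finset.mem_inter.2 ⟨hv₁K, hv₁K'⟩
    · have h' := Finset.mem_singleton.1 h; subst h'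
      exact Finset.mem_inter.2 ⟨hv₂K, hv₂K'⟩
  have hc12 : ({v₁, v₂} : Finset α).card = 2 := by
    rw [Finset.card_insert_of_notMem (by simpa using h12), Finset.card_singleton]
  have hVBle : (K.verts ∩ K'.verts).card ≤ 2 := by
    have h2 : ((K.verts ∩ K'.verts).card : ℤ) ≤ 2 := by linarith
    exact_mod_cast h2
  have hBverts : K.verts ∩ K'.verts = {v₁, v₂} :=
    (Finset.eq_of_subset_of_card_le hsub12 (by rw [hc12]; exact hVBle)).symm
  have hVB2 : ((K.verts ∩ K'.verts).card : ℤ) = 2 := by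
    rw [hBverts, hc12]
    norm_num
  -- glue the potentials
  have hrelK : (phiR (m e₁))⁻¹ * phiR (m e₂) = (θ v₁)⁻¹ * θ v₂ := by
    have h := hθ e₁ he₁K
    rw [if_pos rfl, hKf₁, hKs₁] at h
    exact h
  have hrelK' : (phiR (m e₁))⁻¹ * phiR (m e₂) = (θ' v₁)⁻¹ * θ' v₂ := by
    have h := hθ' e₁ he₁K'
    rw [if_pos rfl, hK'f₁, hK's₁] at h
    exact h
  set c : Multiplicative (ZMod 2) := (θ' v₁)⁻¹ * θ v₁ with hcdef
  set Θ : α → Multiplicative (ZMod 2) := fun x => if x ∈ K.verts then θ x else θ' x * c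
    with hΘdef
  have hΘK : ∀ x ∈ K.verts, Θ x = θ x := fun x hx => if_pos hx
  have hagree : ∀ x ∈ K'.verts, Θ x = θ' x * c := by
    intro x hx
    by_cases hxK : x ∈ K.verts
    · have hxB : x ∈ ({v₁, v₂} : Finset α) := hBverts ▸ Finset.mem_inter.2 ⟨hxK, hx⟩
      rw [hΘK x hxK]
      rcases Finset.mem_insert.1 hxB with h | h
      · subst h
        rw [hcdef]
        group
      · have h' := Finset.mem_singleton.1 h
        rw [h']
        have e2 : θ v₂ = θ v₁ * ((phiR (m e₁))⁻¹ * phiR (m e₂)) := by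
          rw [hrelK, mul_inv_cancel_left]
        have e3 : θ' v₂ = θ' v₁ * ((phiR (m e₁))⁻¹ * phiR (m e₂)) := by
          rw [hrelK', mul_inv_cancel_left]
        rw [e2, e3, hcdef]
        exact (comm_glue _ (θ v₁) (θ' v₁)).symm
    · exact if_neg hxK
  have hΘpot : ∀ e ∈ U.edges,
      (if e = e₁ then (phiR (m e₁))⁻¹ * phiR (m e₂) else phiR (m e))
        = (Θ (U.fst e))⁻¹ * Θ (U.snd e) := by
    intro e he
    by_cases heK : e ∈ K.edges
    · have hUf : U.fst e = K.fst e := (hK₂.2.2 e heK).1.symm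
      have hUs : U.snd e = K.snd e := (hK₂.2.2 e heK).2.symm
      rw [hUf, hUs, hΘK _ (K.fst_mem e heK), hΘK _ (K.snd_mem e heK)]
      exact hθ e heK
    · have heU : e ∈ K.edges ∪ K'.edges := he
      have heK' : e ∈ K'.edges := (Finset.mem_union.1 heU).resolve_left heK
      have hUf : U.fst e = K'.fst e := (hK₃.2.2 e heK').1.symm
      have hUs : U.snd e = K'.snd e := (hK₃.2.2 e heK').2.symm
      rw [hUf, hUs, hagree _ (K'.fst_mem e heK'), hagree _ (K'.snd_mem e heK'), comm_cancel]
      exact hθ' e heK'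
  have hUle := hatBound hT hv₀ hm₁ hm₂ hm₃ h01 h02 he12 he13 he23 hf₁ hs₁ hf₂ hs₂ hf₃ hs₃
      hr hUsub (show e₁ ∈ U.edges from Finset.mem_union_left _ he₁K) Θ hΘpot
  have hUE : U.edges = K.edges ∪ K'.edges := rfl
  have hUV : U.verts = K.verts ∪ K'.verts := rfl
  rw [hUE, hUV] at hUle
  linarith

end Crystal
end

section
/- Suppose that (G,m) is a ℤ²⋊Cs-tight gain graph that has a vertex v₀ of degree 3 with incident edges e₁=(v₀,v₁;m(e₁)), e₂=(v₀,v₂;m(e₂)) and e₃=(v₀,v₂;m(e₃)) (all oriented away from v₀), where v₁,v₂ are distinct vertices different from v₀, such that m(e₂) and m(e₃) have different Cs-components. Let G−v₀+e₂₃ be the gain graph obtained by deleting v₀ with its incident edges and adding the loop e₂₃=(v₂,v₂;m(e₂)⁻¹m(e₃)). If G−v₀+e₂₃ is (2,1)-tight, then G−v₀+e₂₃ is ℤ²⋊Cs-tight. -/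
namespace Crystal

variable {α β : Type}

lemma walk_edges_mem {α β : Type} (G : Multigraph α β) :
    ∀ (L : List (β × Bool)) (u v : α), IsWalk G u v L → ∀ s ∈ L, s.1 ∈ G.edges := by
  intro L
  induction L with
  | nil => intro u v _ s hs; simp at hs
  | cons a L ih =>
    intro u v hw s hs
    rcases List.mem_cons.1 hs with h | h
    · rw [h]; exact hw.1
    · exact ih _ _ hw.2.2 s h

lemma walkGain_congr {β : Type} (m m' : β → PM) (L : List (β × Bool))
    (h : ∀ s ∈ L, m s.1 = m' s.1) : walkGain m L = walkGain m' L := by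
  unfold walkGain
  congr 1
  exact List.map_congr_left (fun s hs => by rw [h s hs])

/-- If the two parallel edges at a degree-3 vertex with two
neighbours have different `𝒞ₛ`-components and the loop 1-reduction gives a
`(2,1)`-tight graph, then that reduction is `ℤ²⋊𝒞ₛ`-tight. -/
theorem diffCs_loopReduction_tight {α β : Type} [DecidableEq α] [DecidableEq β]
    (G : Multigraph α β) (m : β → PM) (hGm : IsGainGraph G m) (hT : PMTight G m)
    (v₀ v₁ v₂ : α) (h01 : v₁ ≠ v₀) (h02 : v₂ ≠ v₀) (h12 : v₁ ≠ v₂)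
    (hv₀ : v₀ ∈ G.verts) (hdeg : G.degree v₀ = 3)
    (e₁ e₂ e₃ : β) (he12 : e₁ ≠ e₂) (he13 : e₁ ≠ e₃) (he23 : e₂ ≠ e₃)
    (hm₁ : e₁ ∈ G.edges) (hm₂ : e₂ ∈ G.edges) (hm₃ : e₃ ∈ G.edges)
    (hf₁ : G.fst e₁ = v₀) (hs₁ : G.snd e₁ = v₁)
    (hf₂ : G.fst e₂ = v₀) (hs₂ : G.snd e₂ = v₂)
    (hf₃ : G.fst e₃ = v₀) (hs₃ : G.snd e₃ = v₂)
    (hr : (m e₂).r ≠ (m e₃).r)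
    (htight : Tight 2 1 ((G.deleteVertex v₀).addEdge e₂ v₂ v₂)) :
    PMTight ((G.deleteVertex v₀).addEdge e₂ v₂ v₂)
      (Function.update m e₂ ((m e₂)⁻¹ * m e₃)) := by
  set G' := (G.deleteVertex v₀).addEdge e₂ v₂ v₂ with hG'
  set m' := Function.update m e₂ ((m e₂)⁻¹ * m e₃) with hm'
  have hv₂ : v₂ ∈ G.verts := hs₂ ▸ G.snd_mem e₂ hm₂
  have hfst' : G'.fst e₂ = v₂ := by
    simp [hG', Multigraph.addEdge]
  have hsnd' : G'.snd e₂ = v₂ := by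
    simp [hG', Multigraph.addEdge]
  have hrloop : (m' e₂).r = true := by
    have : m' e₂ = (m e₂)⁻¹ * m e₃ := by simp [hm']
    rw [this]
    show (xor ((m e₂)⁻¹).r (m e₃).r) = true
    have : ((m e₂)⁻¹).r = (m e₂).r := rfl
    rw [this]
    cases h2 : (m e₂).r <;> cases h3 : (m e₃).r <;> simp_all
  -- If the loop e₂ belongs to a subgraph H, there is a closed walk of gain with r = true
  have key : ∀ H : Multigraph α β, IsSubgraph H G' → e₂ ∈ H.edges →
      ∃ u L, IsWalk H u u L ∧ (walkGain m' L).r = true := by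
    intro H hH he
    have hf : H.fst e₂ = v₂ := (hH.2.2 e₂ he).1.trans hfst'
    have hs : H.snd e₂ = v₂ := (hH.2.2 e₂ he).2.trans hsnd'
    refine ⟨v₂, [(e₂, true)], ⟨he, by simp [stepHead, hf], by simp [IsWalk, stepTail, hs]⟩, ?_⟩
    simp [walkGain, hrloop]
  -- If e₂ is not in H, then H is a subgraph of G and m' agrees with m on H
  have sub : ∀ H : Multigraph α β, IsSubgraph H G' → e₂ ∉ H.edges →
      IsSubgraph H G ∧ ∀ e ∈ H.edges, m e = m' e := by
    intro H hH he
    have hedgesG : ∀ e ∈ H.edges, e ∈ G.edges ∧ e ≠ e₂ := by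
      intro e heH
      have : e ∈ G'.edges := hH.2.1 heH
      have hne : e ≠ e₂ := fun h => he (h ▸ heH)
      simp [hG', Multigraph.addEdge, Multigraph.deleteVertex] at this
      rcases this with h | h
      · exact absurd h hne
      · exact ⟨h.1, hne⟩
    refine ⟨⟨?_, ?_, ?_⟩, ?_⟩
    · intro x hx
      have : x ∈ G'.verts := hH.1 hx
      simp [hG', Multigraph.addEdge, Multigraph.deleteVertex] at this
      rcases this with h | h
      · exact h ▸ hv₂
      · exact h.2
    · intro e heH; exact (hedgesG e heH).1
    · intro e heH
      obtain ⟨_, hne⟩ := hedgesG e heH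
      have h1 := (hH.2.2 e heH).1
      have h2 := (hH.2.2 e heH).2
      constructor
      · rw [h1]; show Function.update (G.deleteVertex v₀).fst e₂ v₂ e = G.fst e
        rw [Function.update_of_ne hne]; rfl
      · rw [h2]; show Function.update (G.deleteVertex v₀).snd e₂ v₂ e = G.snd e
        rw [Function.update_of_ne hne]; rfl
    · intro e heH
      rw [hm', Function.update_of_ne (hedgesG e heH).2]
  refine ⟨htight, ?_, ?_⟩
  · intro H hH hPP
    by_cases he : e₂ ∈ H.edges
    · exfalso
      obtain ⟨u, L, hw, hrL⟩ := key H hH he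
      rw [hPP u L hw] at hrL
      exact Bool.false_ne_true hrL
    · obtain ⟨hsub, hagree⟩ := sub H hH he
      refine hT.2.1 H hsub ?_
      intro u L hw
      rw [walkGain_congr m m' L (fun s hs => hagree s.1 (walk_edges_mem H L u u hw s hs))]
      exact hPP u L hw
  · intro H hH hB
    by_cases he : e₂ ∈ H.edges
    · exfalso
      obtain ⟨u, L, hw, hrL⟩ := key H hH he
      rw [hB u L hw] at hrL
      exact Bool.false_ne_true hrL
    · obtain ⟨hsub, hagree⟩ := sub H hH he
      refine hT.2.2 H hsub ?_
      intro u L hw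
      rw [walkGain_congr m m' L (fun s hs => hagree s.1 (walk_edges_mem H L u u hw s hs))]
      exact hB u L hw


end Crystal
end
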